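/- Let K be a field, let A be a finite set of polynomials in K[x_1,…,x_n], and let x be one of the variables. Define Proj(A, x) to be the union of: all nonzero coefficients of each f ∈ A regarded as a univariate polynomial in x; the resultants res(f, ∂f/∂x, x) for f ∈ A; and the pairwise resultants res(f, g, x) for distinct f, g ∈ A. If G is a chordal structure of A that has a perfect elimination ordering in which x is greater than or equal to every variable occurring in A, then G is a chordal structure of Proj(A, x). -/

import Mathlib

open MvPolynomial

/-- The associated graph of a set of multivariate polynomials: vertices are variables,
with an edge between two distinct variables iff some polynomial contains both. -/
def assocGraph {σ R : Type*} [CommSemiring R] [DecidableEq σ]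
    (F : Set (MvPolynomial σ R)) : SimpleGraph σ where
  Adj i j := i ≠ j ∧ ∃ f ∈ F, i ∈ f.vars ∧ j ∈ f.vars
  symm := by
    constructor
    intro i j h
    exact ⟨h.1.symm, by obtain ⟨f, hf, hi, hj⟩ := h.2; exact ⟨f, hf, hj, hi⟩⟩
  loopless := by constructor; intro i h; exact h.1 rfl

/-- `lt` (a strict linear ordering of the vertices) is a perfect elimination ordering of `G`:
for every vertex `v`, the vertex `v` together with its earlier neighbours forms a clique. -/
def IsPEO {V : Type*} (G : SimpleGraph V) (lt : V → V → Prop) : Prop :=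
  ∀ v : V, G.IsClique (insert v {u | lt u v ∧ G.Adj u v})

/-- A graph is chordal if it admits a perfect elimination ordering. -/
def ChordalGraph {V : Type*} (G : SimpleGraph V) : Prop :=
  ∃ lt : V → V → Prop, IsStrictTotalOrder V lt ∧ IsPEO G lt

/-- `G` is a chordal structure of `F`: `G` is chordal and the associated graph of `F`
is a subgraph of `G`. -/
def ChordalStructure {σ R : Type*} [CommSemiring R] [DecidableEq σ]
    (G : SimpleGraph σ) (F : Set (MvPolynomial σ R)) : Prop :=
  ChordalGraph G ∧ assocGraph F ≤ G

/-- `f` regarded as a univariate polynomial in the variable `k`,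
with coefficients in the polynomial ring in the remaining variables. -/
noncomputable def toUnivar {σ R : Type*} [CommSemiring R] [DecidableEq σ] (k : σ)
    (f : MvPolynomial σ R) : Polynomial (MvPolynomial {j : σ // j ≠ k} R) :=
  optionEquivLeft R {j : σ // j ≠ k} (rename (Equiv.optionSubtypeNe k).symm f)

/-- The `i`-th coefficient of `f` regarded as a univariate polynomial in `k`,
viewed again as a polynomial in all the variables. -/
noncomputable def coeffWrt {σ R : Type*} [CommSemiring R] [DecidableEq σ] (k : σ)
    (f : MvPolynomial σ R) (i : ℕ) : MvPolynomial σ R :=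
  rename Subtype.val ((toUnivar k f).coeff i)

/-- The leading coefficient of `f` regarded as a univariate polynomial in `k`. -/
noncomputable def lcWrt {σ R : Type*} [CommSemiring R] [DecidableEq σ] (k : σ)
    (f : MvPolynomial σ R) : MvPolynomial σ R :=
  rename Subtype.val (toUnivar k f).leadingCoeff

/-- The Sylvester matrix of two univariate polynomials `p` and `q`:
the first `q.natDegree` rows are the shifted coefficient vectors of `p`,
the remaining `p.natDegree` rows are the shifted coefficient vectors of `q`. -/
noncomputable def sylvesterMatrix {R : Type*} [CommRing R] (p q : Polynomial R) :
    Matrix (Fin (q.natDegree + p.natDegree)) (Fin (q.natDegree + p.natDegree)) R :=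
  Matrix.of fun i j =>
    if (i : ℕ) < q.natDegree then
      (if (i : ℕ) ≤ (j : ℕ) ∧ (j : ℕ) ≤ (i : ℕ) + p.natDegree
        then p.coeff (p.natDegree - ((j : ℕ) - (i : ℕ))) else 0)
    else
      (if (i : ℕ) - q.natDegree ≤ (j : ℕ) ∧ (j : ℕ) ≤ ((i : ℕ) - q.natDegree) + q.natDegree
        then q.coeff (q.natDegree - ((j : ℕ) - ((i : ℕ) - q.natDegree))) else 0)

/-- The resultant of two univariate polynomials: the determinant of their Sylvester matrix. -/
noncomputable def resultant {R : Type*} [CommRing R] (p q : Polynomial R) : R :=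
  (sylvesterMatrix p q).det

/-- The resultant of `f` and `g` with respect to the variable `k`: the resultant of `f` and `g`
regarded as univariate polynomials in `k`, viewed again as a polynomial in all the variables. -/
noncomputable def resWrt {σ R : Type*} [CommRing R] [DecidableEq σ] (k : σ)
    (f g : MvPolynomial σ R) : MvPolynomial σ R :=
  rename Subtype.val (resultant (toUnivar k f) (toUnivar k g))

/-- The CAD projection operator: the nonzero coefficients (w.r.t. `x`) of the members of `A`,
the resultants `res(f, ∂f/∂x, x)` for `f ∈ A`, and the pairwise resultants `res(f, g, x)` for
distinct `f, g ∈ A`. -/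
noncomputable def ProjSet {σ R : Type*} [CommRing R] [DecidableEq σ] (x : σ)
    (A : Set (MvPolynomial σ R)) : Set (MvPolynomial σ R) :=
  {a | (∃ f ∈ A, ∃ i : ℕ, a = coeffWrt x f i) ∧ a ≠ 0} ∪
  {r | ∃ f ∈ A, r = resWrt x f (pderiv x f)} ∪
  {r | ∃ f ∈ A, ∃ g ∈ A, f ≠ g ∧ r = resWrt x f g}


/-! ### Auxiliary lemmas -/

section AuxLemmas

variable {σ R : Type*} [CommRing R]

lemma coeff_optionEquivLeft_mem {T : Set σ} {h : MvPolynomial (Option σ) R}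
    (hh : h ∈ supported R (insert none (Option.some '' T))) (i : ℕ) :
    (optionEquivLeft R σ h).coeff i ∈ supported R T := by
  revert i
  refine Algebra.adjoin_induction
    (p := fun h _ => ∀ i, (optionEquivLeft R σ h).coeff i ∈ supported R T)
    ?_ ?_ ?_ ?_ hh
  · rintro _ ⟨o, ho, rfl⟩ i
    rcases ho with rfl | ⟨t, ht, rfl⟩
    · rw [optionEquivLeft_X_none, Polynomial.coeff_X]
      split
      · exact Subalgebra.one_mem _
      · exact Subalgebra.zero_mem _
    · rw [optionEquivLeft_X_some, Polynomial.coeff_C]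
      split
      · exact Algebra.subset_adjoin ⟨t, ht, rfl⟩
      · exact Subalgebra.zero_mem _
  · intro r i
    rw [AlgEquiv.commutes]
    rw [show (algebraMap R (Polynomial (MvPolynomial σ R))) r = Polynomial.C (C r) by
      simp [Polynomial.algebraMap_apply, MvPolynomial.algebraMap_eq]]
    rw [Polynomial.coeff_C]
    split
    · exact Subalgebra.algebraMap_mem _ r
    · exact Subalgebra.zero_mem _
  · intro p q hp hq ihp ihq i
    rw [map_add, Polynomial.coeff_add]
    exact Subalgebra.add_mem _ (ihp i) (ihq i)
  · intro p q hp hq ihp ihq i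
    rw [map_mul, Polynomial.coeff_mul]
    exact Subalgebra.sum_mem _ fun x _ => Subalgebra.mul_mem _ (ihp x.1) (ihq x.2)

lemma optionEquivLeft_eq_C_of_supported {h : MvPolynomial (Option σ) R}
    (hh : h ∈ supported R (Set.range Option.some)) :
    ∃ c, optionEquivLeft R σ h = Polynomial.C c := by
  refine Algebra.adjoin_induction
    (p := fun h _ => ∃ c, optionEquivLeft R σ h = Polynomial.C c) ?_ ?_ ?_ ?_ hh
  · rintro _ ⟨o, ⟨t, rfl⟩, rfl⟩
    exact ⟨X t, optionEquivLeft_X_some R σ t⟩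
  · intro r
    refine ⟨C r, ?_⟩
    rw [AlgEquiv.commutes]
    simp [Polynomial.algebraMap_apply, MvPolynomial.algebraMap_eq]
  · rintro p q hp hq ⟨c, hc⟩ ⟨d, hd⟩
    exact ⟨c + d, by rw [map_add, hc, hd, Polynomial.C_add]⟩
  · rintro p q hp hq ⟨c, hc⟩ ⟨d, hd⟩
    exact ⟨c * d, by rw [map_mul, hc, hd, Polynomial.C_mul]⟩

variable [DecidableEq σ]

lemma coeff_toUnivar_mem (k : σ) (f : MvPolynomial σ R) (i : ℕ) :
    (toUnivar k f).coeff i ∈ supported R {s : {j : σ // j ≠ k} | (s : σ) ∈ f.vars} := by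
  apply coeff_optionEquivLeft_mem
  rw [mem_supported]
  intro o ho
  obtain ⟨y, hy, rfl⟩ := mem_vars_rename _ _ (by exact_mod_cast ho)
  by_cases hyk : y = k
  · subst hyk
    rw [Equiv.optionSubtypeNe_symm_self]
    exact Set.mem_insert _ _
  · rw [Equiv.optionSubtypeNe_symm_of_ne hyk]
    exact Set.mem_insert_of_mem _ ⟨⟨y, hyk⟩, hy, rfl⟩

lemma toUnivar_eq_C_of_not_mem_vars {k : σ} {f : MvPolynomial σ R}
    (hk : k ∉ f.vars) :
    ∃ c, toUnivar k f = Polynomial.C c ∧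
      c ∈ supported R {s : {j : σ // j ≠ k} | (s : σ) ∈ f.vars} := by
  obtain ⟨c, hc⟩ : ∃ c, toUnivar k f = Polynomial.C c := by
    apply optionEquivLeft_eq_C_of_supported
    rw [mem_supported]
    intro o ho
    obtain ⟨y, hy, rfl⟩ := mem_vars_rename _ _ (by exact_mod_cast ho)
    have hyk : y ≠ k := fun h => hk (h ▸ hy)
    rw [Equiv.optionSubtypeNe_symm_of_ne hyk]
    exact ⟨_, rfl⟩
  refine ⟨c, hc, ?_⟩
  have h0 := coeff_toUnivar_mem k f 0
  rwa [hc, Polynomial.coeff_C, if_pos rfl] at h0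

lemma vars_pderiv_subset (x : σ) (f : MvPolynomial σ R) :
    (pderiv x f).vars ⊆ f.vars := by
  conv_lhs => rw [f.as_sum]
  rw [map_sum]
  refine (vars_sum_subset _ _).trans ?_
  intro y hy
  obtain ⟨d, hd, hyd⟩ := Finset.mem_biUnion.mp hy
  rw [pderiv_monomial] at hyd
  by_cases hz : coeff d f * d x = 0
  · rw [hz] at hyd; simp at hyd
  · rw [vars_monomial hz, Finsupp.mem_support_iff] at hyd
    have hdy : d y ≠ 0 := by
      intro h0
      exact hyd (by rw [Finsupp.tsub_apply, h0, Nat.zero_sub])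
    rw [mem_vars]
    exact ⟨d, hd, Finsupp.mem_support_iff.mpr hdy⟩

lemma sylvesterMatrix_C_left {A : Type*} [CommRing A] (c : A) (q : Polynomial A) :
    sylvesterMatrix (Polynomial.C c) q = Matrix.diagonal (fun _ => c) := by
  have hC : (Polynomial.C c).natDegree = 0 := Polynomial.natDegree_C c
  ext i j
  have hi : (i : ℕ) < q.natDegree + (Polynomial.C c).natDegree := i.isLt
  rw [sylvesterMatrix, Matrix.of_apply, if_pos (by omega), Matrix.diagonal_apply]
  by_cases hij : i = j
  · subst hij
    rw [if_pos rfl, if_pos ⟨le_refl _, Nat.le_add_right _ _⟩, Polynomial.coeff_C,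
      if_pos (by omega)]
  · have hij' : (i : ℕ) ≠ (j : ℕ) := fun h => hij (Fin.ext h)
    rw [if_neg (by omega), if_neg hij]

lemma sylvesterMatrix_C_right {A : Type*} [CommRing A] (p : Polynomial A) (c : A) :
    sylvesterMatrix p (Polynomial.C c) = Matrix.diagonal (fun _ => c) := by
  have hC : (Polynomial.C c).natDegree = 0 := Polynomial.natDegree_C c
  ext i j
  rw [sylvesterMatrix, Matrix.of_apply, if_neg (by omega), Matrix.diagonal_apply]
  by_cases hij : i = j
  · subst hij
    rw [if_pos ⟨Nat.sub_le _ _, by omega⟩, Polynomial.coeff_C, if_pos (by omega), if_pos rfl]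
  · have hij' : (i : ℕ) ≠ (j : ℕ) := fun h => hij (Fin.ext h)
    rw [if_neg (by omega), if_neg hij]

lemma resultant_C_left {A : Type*} [CommRing A] (c : A) (q : Polynomial A) :
    ∃ m : ℕ, resultant (Polynomial.C c) q = c ^ m := by
  rw [resultant, sylvesterMatrix_C_left, Matrix.det_diagonal, Finset.prod_const]
  exact ⟨_, rfl⟩

lemma resultant_C_right {A : Type*} [CommRing A] (p : Polynomial A) (c : A) :
    ∃ m : ℕ, resultant p (Polynomial.C c) = c ^ m := by
  rw [resultant, sylvesterMatrix_C_right, Matrix.det_diagonal, Finset.prod_const]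
  exact ⟨_, rfl⟩

lemma resultant_mem_supported {T : Set σ} {p q : Polynomial (MvPolynomial σ R)}
    (hp : ∀ i, p.coeff i ∈ supported R T) (hq : ∀ i, q.coeff i ∈ supported R T) :
    resultant p q ∈ supported R T := by
  rw [resultant, Matrix.det_apply]
  refine Subalgebra.sum_mem _ fun s _ => ?_
  refine Subalgebra.zsmul_mem _ ?_ _
  refine Subalgebra.prod_mem _ fun i _ => ?_
  rw [sylvesterMatrix, Matrix.of_apply]
  split
  · split
    · exact hp _
    · exact Subalgebra.zero_mem _
  · split
    · exact hq _
    · exact Subalgebra.zero_mem _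

lemma vars_coeffWrt_subset (k : σ) (f : MvPolynomial σ R) (m : ℕ) :
    ∀ y ∈ (coeffWrt k f m).vars, y ∈ f.vars := by
  intro y hy
  obtain ⟨s, hs, rfl⟩ := mem_vars_rename _ _ hy
  exact mem_supported.mp (coeff_toUnivar_mem k f m) hs

lemma vars_resWrt (k : σ) (f g : MvPolynomial σ R) :
    ∀ y ∈ (resWrt k f g).vars, y ≠ k ∧ (y ∈ f.vars ∨ y ∈ g.vars) := by
  intro y hy
  obtain ⟨s, hs, rfl⟩ := mem_vars_rename _ _ hy
  refine ⟨s.2, ?_⟩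
  have hres : resultant (toUnivar k f) (toUnivar k g) ∈
      supported R {s : {j : σ // j ≠ k} | (s : σ) ∈ f.vars ∨ (s : σ) ∈ g.vars} := by
    apply resultant_mem_supported
    · intro i
      exact supported_mono (fun u hu => Or.inl hu) (coeff_toUnivar_mem k f i)
    · intro i
      exact supported_mono (fun u hu => Or.inr hu) (coeff_toUnivar_mem k g i)
  exact mem_supported.mp hres hs

lemma vars_resWrt_left {k : σ} {f : MvPolynomial σ R} (g : MvPolynomial σ R)
    (hk : k ∉ f.vars) : ∀ y ∈ (resWrt k f g).vars, y ∈ f.vars := by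
  obtain ⟨c, hc, hsup⟩ := toUnivar_eq_C_of_not_mem_vars hk
  obtain ⟨m, hm⟩ := resultant_C_left c (toUnivar k g)
  intro y hy
  rw [resWrt, hc, hm] at hy
  obtain ⟨s, hs, rfl⟩ := mem_vars_rename _ _ hy
  exact mem_supported.mp hsup (vars_pow c m hs)

lemma vars_resWrt_right {k : σ} (f : MvPolynomial σ R) {g : MvPolynomial σ R}
    (hk : k ∉ g.vars) : ∀ y ∈ (resWrt k f g).vars, y ∈ g.vars := by
  obtain ⟨c, hc, hsup⟩ := toUnivar_eq_C_of_not_mem_vars hk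
  obtain ⟨m, hm⟩ := resultant_C_right (toUnivar k f) c
  intro y hy
  rw [resWrt, hc, hm] at hy
  obtain ⟨s, hs, rfl⟩ := mem_vars_rename _ _ hy
  exact mem_supported.mp hsup (vars_pow c m hs)

end AuxLemmas

/-- If `G` is a chordal structure of the finite set `A` having a perfect
elimination ordering in which `x` is `≥` every variable occurring in `A`, then `G` is a chordal
structure of `Proj(A, x)`. -/
theorem chordalStructure_proj {K : Type*} [Field K] {n : ℕ}
    (A : Finset (MvPolynomial (Fin n) K)) (x : Fin n)
    (G : SimpleGraph (Fin n)) (hG : ChordalStructure G (A : Set (MvPolynomial (Fin n) K)))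
    (hord : ∃ lt : Fin n → Fin n → Prop, IsStrictTotalOrder (Fin n) lt ∧ IsPEO G lt ∧
      ∀ f ∈ A, ∀ y ∈ f.vars, y = x ∨ lt y x) :
    ChordalStructure G (ProjSet x (A : Set (MvPolynomial (Fin n) K))) := by
  obtain ⟨hchord, hsub⟩ := hG
  obtain ⟨lt, hsto, hpeo, hlt⟩ := hord
  refine ⟨hchord, ?_⟩
  intro i j hadj
  obtain ⟨hij, a, ha, hi, hj⟩ := hadj
  have key : ∀ f : MvPolynomial (Fin n) K, f ∈ (A : Set (MvPolynomial (Fin n) K)) →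
      i ∈ f.vars → j ∈ f.vars → G.Adj i j :=
    fun f hf h1 h2 => hsub ⟨hij, f, hf, h1, h2⟩
  have peo_case : ∀ f g : MvPolynomial (Fin n) K,
      f ∈ (A : Set (MvPolynomial (Fin n) K)) → g ∈ (A : Set (MvPolynomial (Fin n) K)) →
      x ∈ f.vars → x ∈ g.vars → i ≠ x → j ≠ x →
      i ∈ f.vars → j ∈ g.vars → G.Adj i j := by
    intro f g hf hg hxf hxg hix hjx hif hjg
    have hadjix : G.Adj i x := hsub ⟨hix, f, hf, hif, hxf⟩
    have hadjjx : G.Adj j x := hsub ⟨hjx, g, hg, hjg, hxg⟩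
    have hlti : lt i x := (hlt f hf i hif).resolve_left hix
    have hltj : lt j x := (hlt g hg j hjg).resolve_left hjx
    exact hpeo x (Set.mem_insert_of_mem _ ⟨hlti, hadjix⟩)
      (Set.mem_insert_of_mem _ ⟨hltj, hadjjx⟩) hij
  rcases ha with (⟨⟨f, hf, m, rfl⟩, -⟩ | ⟨f, hf, rfl⟩) | ⟨f, hf, g, hg, hfg, rfl⟩
  · exact key f hf (vars_coeffWrt_subset x f m i hi) (vars_coeffWrt_subset x f m j hj)
  · have h1 := vars_resWrt x f (pderiv x f) i hi
    have h2 := vars_resWrt x f (pderiv x f) j hj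
    exact key f hf (h1.2.elim id fun h => vars_pderiv_subset x f h)
      (h2.2.elim id fun h => vars_pderiv_subset x f h)
  · by_cases hxf : x ∈ f.vars
    · by_cases hxg : x ∈ g.vars
      · have h1 := vars_resWrt x f g i hi
        have h2 := vars_resWrt x f g j hj
        rcases h1.2 with hif | hig <;> rcases h2.2 with hjf | hjg
        · exact key f hf hif hjf
        · exact peo_case f g hf hg hxf hxg h1.1 h2.1 hif hjg
        · exact peo_case g f hg hf hxg hxf h1.1 h2.1 hig hjf
        · exact key g hg hig hjg
      · exact key g hg (vars_resWrt_right f hxg i hi) (vars_resWrt_right f hxg j hj)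
    · exact key f hf (vars_resWrt_left g hxf i hi) (vars_resWrt_left g hxf j hj)
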